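/- Let J = [a,b) carry w_{n−l} in the construction, let x ∈ (1/2)J_{k−1}^{(3)} (the left half of the tail interval of J), and for 0 ≤ m ≤ k−2 let J_m be the right subinterval of J of length 3^{−m}|J|. Then H(wχ_{J_m∖J_{m+1}})(x) = ∫_{J_m∖J_{m+1}} w(y)/(x−y) dy ≥ w(J_m^{(2)})/|J_m| = (2/3)·2^l, and consequently B(x) := Σ_{m=0}^{k−2} H(wχ_{J_m∖J_{m+1}})(x) ≥ (2/3)(k−1)·2^l. -/

import Mathlib

open MeasureTheory

/-- `ε = 3^{-k}`. -/
noncomputable def eps (k : ℕ) : ℝ := (3:ℝ) ^ (-(k:ℤ))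

/-- `p = (1/(3ε))((1+ε)/2 + 4ε²/(1+ε))`. -/
noncomputable def pp (k : ℕ) : ℝ := (1/(3 * eps k)) * ((1 + eps k)/2 + 4 * (eps k)^2/(1 + eps k))

/-- `u = √p + √(p−1)`, the larger root of `u + 1/u = 2√p`. -/
noncomputable def uu (k : ℕ) : ℝ := Real.sqrt (pp k) + Real.sqrt (pp k - 1)

/-- The recursively defined weights `w_ν(ω, σ, I)` of the paper, on `I = [a, a+h)`
(the dual parameter `σ` is determined by `ωσ = p` and is omitted).
`W k ν ω a h` equals `w_ν(ω, p/ω, [a, a+h))` and vanishes outside `[a, a+h)`.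

For `ν = 0`: `w₀ = (ω/√p)(u χ_{I₋} + u⁻¹ χ_{I₊})`.

For `ν ≥ 1`, with `I_m` the right subinterval of `I` of length `3^{-m}|I|` and `J^{(i)}`
the `i`-th third of `J`:
`w_ν = (ω/p)(Σ_{m=0}^{k-2} χ_{I_m^{(1)}} + χ_{I_{k-1}^{(1)} ∪ I_{k-1}^{(2)}}
+ (4ε/(1+ε)) χ_{I_{k-1}^{(3)}}) + Σ_{m=0}^{k-2} w_{ν-1}(2ω, σ/2, I_m^{(2)})`. -/
noncomputable def W (k : ℕ) : ℕ → ℝ → ℝ → ℝ → ℝ → ℝ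
  | 0, ω, a, h, x =>
      Set.indicator (Set.Ico a (a + h/2)) (fun _ => ω / Real.sqrt (pp k) * uu k) x +
      Set.indicator (Set.Ico (a + h/2) (a + h)) (fun _ => ω / Real.sqrt (pp k) / uu k) x
  | (ν+1), ω, a, h, x =>
      (∑ m ∈ Finset.range (k-1),
        Set.indicator (Set.Ico (a + h - (3:ℝ)^(-(m:ℤ))*h) (a + h - (2/3)*(3:ℝ)^(-(m:ℤ))*h))
          (fun _ => ω / pp k) x) +
      Set.indicator (Set.Ico (a + h - (3:ℝ)^(1-(k:ℤ))*h) (a + h - (1/3)*(3:ℝ)^(1-(k:ℤ))*h))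
        (fun _ => ω / pp k) x +
      Set.indicator (Set.Ico (a + h - (1/3)*(3:ℝ)^(1-(k:ℤ))*h) (a + h))
        (fun _ => (4 * eps k/(1 + eps k)) * (ω / pp k)) x +
      ∑ m ∈ Finset.range (k-1),
        W k ν (2*ω) (a + h - (2/3)*(3:ℝ)^(-(m:ℤ))*h) ((1/3)*(3:ℝ)^(-(m:ℤ))*h) x


lemma eps_pos (k : ℕ) : 0 < eps k := by unfold eps; positivity
lemma one_add_eps_pos (k : ℕ) : 0 < 1 + eps k := by linarith [eps_pos k]
lemma pp_pos (k : ℕ) : 0 < pp k := by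
  have h1 := eps_pos k; have h2 := one_add_eps_pos k
  unfold pp; positivity
lemma eps_le (k : ℕ) (hk : 2 ≤ k) : eps k ≤ 1/9 := by
  have : (3:ℝ) ^ (-(k:ℤ)) ≤ (3:ℝ) ^ (-(2:ℤ)) := by
    apply zpow_le_zpow_right₀ (by norm_num)
    omega
  simpa [eps] using this.trans_eq (by norm_num)
lemma pp_ge_one (k : ℕ) (hk : 2 ≤ k) : 1 ≤ pp k := by
  have h1 := eps_pos k; have h2 := one_add_eps_pos k
  have h3 := eps_le k hk
  have h4 : 0 ≤ 4 * (eps k)^2/(1 + eps k) := by positivity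
  have h5 : (3:ℝ) ≤ 1/(3 * eps k) := by
    rw [le_div_iff₀ (by positivity)]; nlinarith
  have h6 : (1 + eps k)/2 ≥ 1/2 := by linarith
  unfold pp; nlinarith
lemma sqrt_pp_pos (k : ℕ) : 0 < Real.sqrt (pp k) := Real.sqrt_pos.2 (pp_pos k)
lemma uu_pos (k : ℕ) : 0 < uu k := by
  have := sqrt_pp_pos k
  have : (0:ℝ) ≤ Real.sqrt (pp k - 1) := Real.sqrt_nonneg _
  unfold uu; linarith [sqrt_pp_pos k]
lemma uu_add_inv (k : ℕ) (hk : 2 ≤ k) : uu k + (uu k)⁻¹ = 2 * Real.sqrt (pp k) := by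
  have h1 : (0:ℝ) ≤ pp k - 1 := by linarith [pp_ge_one k hk]
  have h2 : (0:ℝ) ≤ pp k := (pp_pos k).le
  have hmul : uu k * (Real.sqrt (pp k) - Real.sqrt (pp k - 1)) = 1 := by
    unfold uu
    have e1 : Real.sqrt (pp k) ^ 2 = pp k := Real.sq_sqrt h2
    have e2 : Real.sqrt (pp k - 1) ^ 2 = pp k - 1 := Real.sq_sqrt h1
    nlinarith
  have hinv : (uu k)⁻¹ = Real.sqrt (pp k) - Real.sqrt (pp k - 1) :=
    inv_eq_of_mul_eq_one_right hmul
  rw [hinv]; unfold uu; ring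

lemma zpow_neg_nat (m : ℕ) : (3:ℝ)^(-(m:ℤ)) = ((3:ℝ)⁻¹)^m := by
  rw [zpow_neg, zpow_natCast, inv_pow]

lemma zpow_neg_nat_pos (m : ℕ) : 0 < (3:ℝ)^(-(m:ℤ)) := by positivity

lemma zpow_neg_nat_le_one (m : ℕ) : (3:ℝ)^(-(m:ℤ)) ≤ 1 :=
  zpow_le_one_of_nonpos₀ (by norm_num) (by omega)

lemma three_zpow_one_sub (k : ℕ) : (3:ℝ)^(1-(k:ℤ)) = 3 * eps k := by
  rw [eps, zpow_sub₀ (by norm_num : (3:ℝ) ≠ 0), zpow_neg]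
  field_simp

lemma three_zpow_one_sub_pos (k : ℕ) : 0 < (3:ℝ)^(1-(k:ℤ)) := by positivity

lemma three_zpow_one_sub_le_one (k : ℕ) (hk : 1 ≤ k) : (3:ℝ)^(1-(k:ℤ)) ≤ 1 :=
  zpow_le_one_of_nonpos₀ (by norm_num) (by omega)

lemma W_nonneg (k ν : ℕ) : ∀ (ω a h x : ℝ), 0 ≤ ω → 0 ≤ W k ν ω a h x := by
  induction ν with
  | zero =>
    intro ω a h x hω; simp only [W]
    have h1 := sqrt_pp_pos k; have h2 := uu_pos k
    have c1 : 0 ≤ ω / Real.sqrt (pp k) * uu k := by positivity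
    have c2 : 0 ≤ ω / Real.sqrt (pp k) / uu k := by positivity
    exact add_nonneg (Set.indicator_nonneg (fun _ _ => c1) x)
      (Set.indicator_nonneg (fun _ _ => c2) x)
  | succ ν ih =>
    intro ω a h x hω; simp only [W]
    have hp := pp_pos k; have hε := eps_pos k; have h1ε := one_add_eps_pos k
    have c1 : 0 ≤ ω / pp k := by positivity
    have c2 : 0 ≤ (4 * eps k/(1 + eps k)) * (ω / pp k) := by positivity
    refine add_nonneg (add_nonneg (add_nonneg ?_ ?_) ?_) ?_
    · exact Finset.sum_nonneg fun m _ => Set.indicator_nonneg (fun _ _ => c1) x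
    · exact Set.indicator_nonneg (fun _ _ => c1) x
    · exact Set.indicator_nonneg (fun _ _ => c2) x
    · exact Finset.sum_nonneg fun m _ => ih _ _ _ x (by linarith)

lemma W_support (k ν : ℕ) (hk : 1 ≤ k) :
    ∀ (ω a h x : ℝ), 0 ≤ h → x ∉ Set.Ico a (a+h) → W k ν ω a h x = 0 := by
  induction ν with
  | zero =>
    intro ω a h x hh hx; simp only [W]
    rw [Set.indicator_of_notMem, Set.indicator_of_notMem, add_zero]
    · exact fun hm => hx (Set.Ico_subset_Ico (by linarith) le_rfl hm)
    · exact fun hm => hx (Set.Ico_subset_Ico le_rfl (by linarith) hm)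
  | succ ν ih =>
    intro ω a h x hh hx; simp only [W]
    have hT1 := three_zpow_one_sub_pos k
    have hT2 := three_zpow_one_sub_le_one k hk
    have z1 : ∀ m : ℕ, (3:ℝ)^(-(m:ℤ))*h ≤ h := fun m =>
      mul_le_of_le_one_left hh (zpow_neg_nat_le_one m)
    rw [Finset.sum_eq_zero, Finset.sum_eq_zero, Set.indicator_of_notMem,
      Set.indicator_of_notMem]
    · ring
    · refine fun hm => hx (Set.Ico_subset_Ico ?_ le_rfl hm)
      nlinarith [z1 0, hT1.le, mul_nonneg hT1.le hh]
    · refine fun hm => hx (Set.Ico_subset_Ico ?_ ?_ hm)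
      · nlinarith [mul_le_of_le_one_left hh hT2]
      · nlinarith [mul_nonneg hT1.le hh]
    · intro m _
      have hz := zpow_neg_nat_pos m
      refine ih _ _ _ x (by positivity) fun hm => hx (Set.Ico_subset_Ico ?_ ?_ hm)
      · nlinarith [z1 m, mul_nonneg hz.le hh]
      · nlinarith [mul_nonneg hz.le hh]
    · intro m _
      have hz := zpow_neg_nat_pos m
      refine Set.indicator_of_notMem (fun hm => hx (Set.Ico_subset_Ico ?_ ?_ hm)) _
      · nlinarith [z1 m]
      · nlinarith [mul_nonneg hz.le hh]

lemma W_integrable (k ν : ℕ) : ∀ (ω a h : ℝ), Integrable (fun x => W k ν ω a h x) := by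
  have base : ∀ (c d C : ℝ), Integrable (fun x => Set.indicator (Set.Ico c d) (fun _ => C) x) := by
    intro c d C
    exact (integrableOn_const measure_Ico_lt_top.ne).integrable_indicator
      measurableSet_Ico
  induction ν with
  | zero => intro ω a h; simp only [W]; exact (base _ _ _).add (base _ _ _)
  | succ ν ih =>
    intro ω a h; simp only [W]
    refine (((integrable_finset_sum _ fun m _ => base _ _ _).add (base _ _ _)).add
      (base _ _ _)).add (integrable_finset_sum _ fun m _ => ih _ _ _)

lemma integral_add4 {A B C D : ℝ → ℝ} (hA : Integrable A) (hB : Integrable B)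
    (hC : Integrable C) (hD : Integrable D) :
    ∫ x, (A x + B x + C x + D x) = (∫ x, A x) + (∫ x, B x) + (∫ x, C x) + (∫ x, D x) := by
  have h1 : Integrable (fun x => A x + B x) := hA.add hB
  have h2 : Integrable (fun x => A x + B x + C x) := h1.add hC
  rw [integral_add h2 hD, integral_add h1 hC, integral_add hA hB]

lemma integral_indicator_Ico (C c d : ℝ) (h : c ≤ d) :
    ∫ x, Set.indicator (Set.Ico c d) (fun _ => C) x = C * (d - c) := by
  rw [integral_indicator_const _ measurableSet_Ico, Real.volume_real_Ico_of_le h,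
    smul_eq_mul, mul_comm]

lemma geom_sum_eps (k : ℕ) (hk : 1 ≤ k) :
    ∑ m ∈ Finset.range (k-1), ((3:ℝ)⁻¹)^m = (3/2) * (1 - 3 * eps k) := by
  rw [geom_sum_eq (by norm_num : ((3:ℝ)⁻¹) ≠ 1)]
  have : ((3:ℝ)⁻¹)^(k-1) = 3 * eps k := by
    rw [← zpow_neg_nat, ← three_zpow_one_sub]
    congr 1
    push_cast [Nat.cast_sub hk]
    ring
  rw [this]; ring

lemma W_integral (k : ℕ) (hk : 2 ≤ k) (ν : ℕ) :
    ∀ (ω a h : ℝ), 0 ≤ h → ∫ x, W k ν ω a h x = ω * h := by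
  have hbase : ∀ (c d C : ℝ), Integrable (fun x => Set.indicator (Set.Ico c d) (fun _ => C) x) := by
    intro c d C
    exact (integrableOn_const measure_Ico_lt_top.ne).integrable_indicator
      measurableSet_Ico
  induction ν with
  | zero =>
    intro ω a h hh; simp only [W]
    rw [integral_add (hbase _ _ _) (hbase _ _ _),
      integral_indicator_Ico _ _ _ (by linarith), integral_indicator_Ico _ _ _ (by linarith)]
    have hs : Real.sqrt (pp k) ≠ 0 := (sqrt_pp_pos k).ne'
    have hu : uu k ≠ 0 := (uu_pos k).ne'
    have hsum := uu_add_inv k hk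
    have e1 : ω / Real.sqrt (pp k) * uu k * (a + h/2 - a)
        + ω / Real.sqrt (pp k) / uu k * (a + h - (a + h/2))
        = (ω / Real.sqrt (pp k)) * (uu k + (uu k)⁻¹) * (h/2) := by
      field_simp; ring
    rw [e1, hsum]; field_simp
  | succ ν ih =>
    intro ω a h hh; simp only [W]
    have hT := three_zpow_one_sub k
    have hTpos := three_zpow_one_sub_pos k
    have hE := eps_pos k
    have hP := pp_pos k
    have h1E := one_add_eps_pos k
    rw [integral_add4 (integrable_finset_sum _ fun m _ => hbase _ _ _) (hbase _ _ _)
        (hbase _ _ _) (integrable_finset_sum _ fun m _ => W_integrable k ν _ _ _),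
      integral_finset_sum _ (fun m _ => hbase _ _ _),
      integral_finset_sum _ (fun m _ => W_integrable k ν _ _ _)]
    have e1 : ∀ m ∈ Finset.range (k-1),
        ∫ x, Set.indicator (Set.Ico (a + h - (3:ℝ)^(-(m:ℤ))*h) (a + h - (2/3)*(3:ℝ)^(-(m:ℤ))*h))
          (fun _ => ω / pp k) x = (ω / pp k) * (h/3) * ((3:ℝ)⁻¹)^m := by
      intro m _
      have hz := zpow_neg_nat_pos m
      rw [integral_indicator_Ico _ _ _ (by nlinarith), ← zpow_neg_nat]
      ring
    have e2 : ∀ m ∈ Finset.range (k-1),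
        ∫ x, W k ν (2*ω) (a + h - (2/3)*(3:ℝ)^(-(m:ℤ))*h) ((1/3)*(3:ℝ)^(-(m:ℤ))*h) x
          = (2*ω) * (h/3) * ((3:ℝ)⁻¹)^m := by
      intro m _
      have hz := zpow_neg_nat_pos m
      rw [ih _ _ _ (by positivity), ← zpow_neg_nat]
      ring
    rw [Finset.sum_congr rfl e1, Finset.sum_congr rfl e2, ← Finset.mul_sum, ← Finset.mul_sum,
      geom_sum_eps k (by omega),
      integral_indicator_Ico _ _ _ (by nlinarith), integral_indicator_Ico _ _ _ (by nlinarith),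
      hT]
    have hPne : pp k ≠ 0 := hP.ne'
    have hEne : eps k ≠ 0 := hE.ne'
    have h1Ene : (1 : ℝ) + eps k ≠ 0 := h1E.ne'
    rw [pp]
    field_simp
    ring

lemma le_W_succ (k ν : ℕ) (ω a h : ℝ) (hω : 0 ≤ ω) (m : ℕ) (hm : m ∈ Finset.range (k-1))
    (x : ℝ) :
    W k ν (2*ω) (a + h - (2/3)*(3:ℝ)^(-(m:ℤ))*h) ((1/3)*(3:ℝ)^(-(m:ℤ))*h) x
      ≤ W k (ν+1) ω a h x := by
  have hp := pp_pos k; have hε := eps_pos k; have h1ε := one_add_eps_pos k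
  have c1 : 0 ≤ ω / pp k := by positivity
  have c2 : 0 ≤ (4 * eps k/(1 + eps k)) * (ω / pp k) := by positivity
  have hnn : ∀ i ∈ Finset.range (k-1), 0 ≤ (fun m' =>
      W k ν (2*ω) (a + h - (2/3)*(3:ℝ)^(-(m':ℤ))*h) ((1/3)*(3:ℝ)^(-(m':ℤ))*h) x) i :=
    fun i _ => W_nonneg k ν _ _ _ x (by linarith)
  have hsum := Finset.single_le_sum hnn hm
  simp only [] at hsum
  have n1 : 0 ≤ ∑ m' ∈ Finset.range (k-1),
      Set.indicator (Set.Ico (a + h - (3:ℝ)^(-(m':ℤ))*h) (a + h - (2/3)*(3:ℝ)^(-(m':ℤ))*h))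
        (fun _ => ω / pp k) x :=
    Finset.sum_nonneg fun m' _ => Set.indicator_nonneg (fun _ _ => c1) x
  have n2 : 0 ≤ Set.indicator
      (Set.Ico (a + h - (3:ℝ)^(1-(k:ℤ))*h) (a + h - (1/3)*(3:ℝ)^(1-(k:ℤ))*h))
      (fun _ => ω / pp k) x := Set.indicator_nonneg (fun _ _ => c1) x
  have n3 : 0 ≤ Set.indicator (Set.Ico (a + h - (1/3)*(3:ℝ)^(1-(k:ℤ))*h) (a + h))
      (fun _ => (4 * eps k/(1 + eps k)) * (ω / pp k)) x :=
    Set.indicator_nonneg (fun _ _ => c2) x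
  simp only [W]
  linarith

lemma key_m (k : ℕ) (hk : 2 ≤ k) (ν' : ℕ) (l : ℕ) (a h : ℝ) (hh : 0 < h) (x : ℝ)
    (x1 : a + h - (3:ℝ)^(-(k:ℤ))*h ≤ x) (x2 : x < a + h - (3:ℝ)^(-(k:ℤ))*h/2)
    (m : ℕ) (hm : m < k - 1) :
    (2/3) * (2:ℝ)^l ≤
      ∫ y in Set.Ico (a + h - (3:ℝ)^(-(m:ℤ))*h) (a + h - (3:ℝ)^(-((m:ℤ)+1))*h),
        W k (ν'+1) ((2:ℝ)^l) a h y / (x - y) := by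
  have hω : (0:ℝ) < 2^l := by positivity
  have ht : 0 < (3:ℝ)^(-(m:ℤ)) := zpow_neg_nat_pos m
  have ht1 : (3:ℝ)^(-(m:ℤ)) ≤ 1 := zpow_neg_nat_le_one m
  have he : 0 < (3:ℝ)^(-(k:ℤ)) := by positivity
  have hDu : (3:ℝ)^(-((m:ℤ)+1)) = (3:ℝ)^(-(m:ℤ)) / 3 := by
    rw [show -((m:ℤ)+1) = -(m:ℤ) + (-1) by ring, zpow_add₀ (by norm_num : (3:ℝ) ≠ 0)]
    norm_num
    ring
  have hεt : (3:ℝ)^(-(k:ℤ)) < (3:ℝ)^(-(m:ℤ)) / 3 := by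
    rw [← hDu]
    refine zpow_lt_zpow_right₀ (by norm_num) ?_
    omega
  have hc : 0 < ((3:ℝ)^(-(m:ℤ))/3)*h - (3:ℝ)^(-(k:ℤ))*h := by nlinarith
  have hWint : Integrable (fun y => W k (ν'+1) ((2:ℝ)^l) a h y) := W_integrable k (ν'+1) _ a h
  have hWnn : ∀ y, 0 ≤ W k (ν'+1) ((2:ℝ)^l) a h y :=
    fun y => W_nonneg k (ν'+1) _ a h y hω.le
  have hxy : ∀ y ∈ Set.Ico (a + h - (3:ℝ)^(-(m:ℤ))*h) (a + h - (3:ℝ)^(-((m:ℤ)+1))*h),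
      ((3:ℝ)^(-(m:ℤ))/3)*h - (3:ℝ)^(-(k:ℤ))*h ≤ x - y ∧ x - y ≤ (3:ℝ)^(-(m:ℤ))*h := by
    intro y hy
    obtain ⟨hy1, hy2⟩ := hy
    rw [hDu] at hy2
    constructor
    · nlinarith
    · nlinarith
  have hIq : IntegrableOn (fun y => W k (ν'+1) ((2:ℝ)^l) a h y / (x - y))
      (Set.Ico (a + h - (3:ℝ)^(-(m:ℤ))*h) (a + h - (3:ℝ)^(-((m:ℤ)+1))*h)) := by
    have hbd : ∀ᵐ y ∂(volume.restrict
        (Set.Ico (a + h - (3:ℝ)^(-(m:ℤ))*h) (a + h - (3:ℝ)^(-((m:ℤ)+1))*h))),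
        ‖(x - y)⁻¹‖ ≤ (((3:ℝ)^(-(m:ℤ))/3)*h - (3:ℝ)^(-(k:ℤ))*h)⁻¹ := by
      refine ae_restrict_of_forall_mem measurableSet_Ico fun y hy => ?_
      obtain ⟨h1, h2⟩ := hxy y hy
      have h0 : 0 < x - y := lt_of_lt_of_le hc h1
      rw [Real.norm_eq_abs, abs_of_pos (by positivity)]
      exact inv_anti₀ hc h1
    have hb := Integrable.bdd_mul (c := (((3:ℝ)^(-(m:ℤ))/3)*h - (3:ℝ)^(-(k:ℤ))*h)⁻¹) hWint.integrableOn
      ((measurable_const.sub measurable_id).inv.aestronglyMeasurable) hbd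
    exact hb.congr (Filter.Eventually.of_forall fun y => inv_mul_eq_div _ _)
  have s1 : ∫ y in Set.Ico (a + h - (3:ℝ)^(-(m:ℤ))*h) (a + h - (3:ℝ)^(-((m:ℤ)+1))*h),
        W k (ν'+1) ((2:ℝ)^l) a h y * ((3:ℝ)^(-(m:ℤ))*h)⁻¹
      ≤ ∫ y in Set.Ico (a + h - (3:ℝ)^(-(m:ℤ))*h) (a + h - (3:ℝ)^(-((m:ℤ)+1))*h),
        W k (ν'+1) ((2:ℝ)^l) a h y / (x - y) := by
    refine setIntegral_mono_on (hWint.mul_const _).integrableOn hIq measurableSet_Ico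
      fun y hy => ?_
    obtain ⟨h1, h2⟩ := hxy y hy
    have h0 : 0 < x - y := lt_of_lt_of_le hc h1
    have hi : ((3:ℝ)^(-(m:ℤ))*h)⁻¹ ≤ (x - y)⁻¹ := inv_anti₀ h0 h2
    calc W k (ν'+1) ((2:ℝ)^l) a h y * ((3:ℝ)^(-(m:ℤ))*h)⁻¹
        ≤ W k (ν'+1) ((2:ℝ)^l) a h y * (x - y)⁻¹ :=
          mul_le_mul_of_nonneg_left hi (hWnn y)
      _ = W k (ν'+1) ((2:ℝ)^l) a h y / (x - y) := (div_eq_mul_inv _ _).symm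
  have s2 : ∫ y in Set.Ico (a + h - (3:ℝ)^(-(m:ℤ))*h) (a + h - (3:ℝ)^(-((m:ℤ)+1))*h),
        W k (ν'+1) ((2:ℝ)^l) a h y * ((3:ℝ)^(-(m:ℤ))*h)⁻¹
      = (∫ y in Set.Ico (a + h - (3:ℝ)^(-(m:ℤ))*h) (a + h - (3:ℝ)^(-((m:ℤ)+1))*h),
        W k (ν'+1) ((2:ℝ)^l) a h y) * ((3:ℝ)^(-(m:ℤ))*h)⁻¹ := integral_mul_const _ _
  have hMD : Set.Ico (a + h - (2/3)*(3:ℝ)^(-(m:ℤ))*h)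
      (a + h - (2/3)*(3:ℝ)^(-(m:ℤ))*h + (1/3)*(3:ℝ)^(-(m:ℤ))*h)
      ⊆ Set.Ico (a + h - (3:ℝ)^(-(m:ℤ))*h) (a + h - (3:ℝ)^(-((m:ℤ)+1))*h) := by
    refine Set.Ico_subset_Ico ?_ ?_
    · nlinarith
    · rw [hDu]; nlinarith
  have s3 : ∫ y in Set.Ico (a + h - (2/3)*(3:ℝ)^(-(m:ℤ))*h)
        (a + h - (2/3)*(3:ℝ)^(-(m:ℤ))*h + (1/3)*(3:ℝ)^(-(m:ℤ))*h),
        W k (ν'+1) ((2:ℝ)^l) a h y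
      ≤ ∫ y in Set.Ico (a + h - (3:ℝ)^(-(m:ℤ))*h) (a + h - (3:ℝ)^(-((m:ℤ)+1))*h),
        W k (ν'+1) ((2:ℝ)^l) a h y :=
    setIntegral_mono_set hWint.integrableOn
      (Filter.Eventually.of_forall hWnn) hMD.eventuallyLE
  have s4 : ∫ y in Set.Ico (a + h - (2/3)*(3:ℝ)^(-(m:ℤ))*h)
        (a + h - (2/3)*(3:ℝ)^(-(m:ℤ))*h + (1/3)*(3:ℝ)^(-(m:ℤ))*h),
        W k ν' (2*(2:ℝ)^l) (a + h - (2/3)*(3:ℝ)^(-(m:ℤ))*h) ((1/3)*(3:ℝ)^(-(m:ℤ))*h) y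
      ≤ ∫ y in Set.Ico (a + h - (2/3)*(3:ℝ)^(-(m:ℤ))*h)
        (a + h - (2/3)*(3:ℝ)^(-(m:ℤ))*h + (1/3)*(3:ℝ)^(-(m:ℤ))*h),
        W k (ν'+1) ((2:ℝ)^l) a h y := by
    refine setIntegral_mono_on (W_integrable k ν' _ _ _).integrableOn hWint.integrableOn
      measurableSet_Ico fun y _ => ?_
    exact le_W_succ k ν' ((2:ℝ)^l) a h hω.le m (Finset.mem_range.2 hm) y
  have s5 : ∫ y in Set.Ico (a + h - (2/3)*(3:ℝ)^(-(m:ℤ))*h)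
        (a + h - (2/3)*(3:ℝ)^(-(m:ℤ))*h + (1/3)*(3:ℝ)^(-(m:ℤ))*h),
        W k ν' (2*(2:ℝ)^l) (a + h - (2/3)*(3:ℝ)^(-(m:ℤ))*h) ((1/3)*(3:ℝ)^(-(m:ℤ))*h) y
      = (2*(2:ℝ)^l) * ((1/3)*(3:ℝ)^(-(m:ℤ))*h) := by
    rw [setIntegral_eq_integral_of_forall_compl_eq_zero
      (fun y hy => W_support k ν' (by omega) _ _ _ y (by positivity) hy)]
    exact W_integral k hk ν' _ _ _ (by positivity)
  have hinv : (0:ℝ) ≤ ((3:ℝ)^(-(m:ℤ))*h)⁻¹ := by positivity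
  calc (2/3) * (2:ℝ)^l
      = (2*(2:ℝ)^l) * ((1/3)*(3:ℝ)^(-(m:ℤ))*h) * ((3:ℝ)^(-(m:ℤ))*h)⁻¹ := by
        rw [mul_inv]
        field_simp
    _ ≤ (∫ y in Set.Ico (a + h - (2/3)*(3:ℝ)^(-(m:ℤ))*h)
          (a + h - (2/3)*(3:ℝ)^(-(m:ℤ))*h + (1/3)*(3:ℝ)^(-(m:ℤ))*h),
          W k (ν'+1) ((2:ℝ)^l) a h y) * ((3:ℝ)^(-(m:ℤ))*h)⁻¹ := by
        rw [← s5]; exact mul_le_mul_of_nonneg_right s4 hinv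
    _ ≤ (∫ y in Set.Ico (a + h - (3:ℝ)^(-(m:ℤ))*h) (a + h - (3:ℝ)^(-((m:ℤ)+1))*h),
          W k (ν'+1) ((2:ℝ)^l) a h y) * ((3:ℝ)^(-(m:ℤ))*h)⁻¹ :=
        mul_le_mul_of_nonneg_right s3 hinv
    _ = ∫ y in Set.Ico (a + h - (3:ℝ)^(-(m:ℤ))*h) (a + h - (3:ℝ)^(-((m:ℤ)+1))*h),
          W k (ν'+1) ((2:ℝ)^l) a h y * ((3:ℝ)^(-(m:ℤ))*h)⁻¹ := s2.symm
    _ ≤ _ := s1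


/-- Main lower bound term: if `J = [a, a+h)` carries `w_{n−l}` (so `w = W k ν (2^l) a h`
on `J` with `ν = n − l ≥ 1`), and `x` lies in the left half of the tail interval
`J_{k−1}^{(3)}`, then for each `0 ≤ m ≤ k−2`,
`H(wχ_{J_m∖J_{m+1}})(x) = ∫_{J_m∖J_{m+1}} w(y)/(x−y) dy ≥ w(J_m^{(2)})/|J_m| = (2/3)·2^l`,
and consequently `B(x) = Σ_{m=0}^{k−2} H(wχ_{J_m∖J_{m+1}})(x) ≥ (2/3)(k−1)·2^l`. -/
theorem hilbert_lower_bound_B (k : ℕ) (hk : 2 ≤ k) (ν : ℕ) (hν : 1 ≤ ν) (l : ℕ)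
    (a h : ℝ) (hh : 0 < h) (x : ℝ)
    (hx : x ∈ Set.Ico (a + h - (3:ℝ)^(-(k:ℤ))*h) (a + h - (3:ℝ)^(-(k:ℤ))*h/2)) :
    (∀ m < k - 1,
      (2/3) * (2:ℝ)^l ≤
        ∫ y in Set.Ico (a + h - (3:ℝ)^(-(m:ℤ))*h) (a + h - (3:ℝ)^(-((m:ℤ)+1))*h),
          W k ν ((2:ℝ)^l) a h y / (x - y)) ∧
    (2/3) * ((k:ℝ) - 1) * (2:ℝ)^l ≤
      ∑ m ∈ Finset.range (k-1),
        ∫ y in Set.Ico (a + h - (3:ℝ)^(-(m:ℤ))*h) (a + h - (3:ℝ)^(-((m:ℤ)+1))*h),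
          W k ν ((2:ℝ)^l) a h y / (x - y) := by
  obtain ⟨ν', rfl⟩ : ∃ ν'', ν = ν'' + 1 := ⟨ν - 1, by omega⟩
  obtain ⟨x1, x2⟩ := hx
  have key := fun m hm => key_m k hk ν' l a h hh x x1 x2 m hm
  refine ⟨key, ?_⟩
  calc (2/3) * ((k:ℝ) - 1) * (2:ℝ)^l
      = ∑ _m ∈ Finset.range (k-1), (2/3) * (2:ℝ)^l := by
        rw [Finset.sum_const, Finset.card_range, nsmul_eq_mul,
          Nat.cast_sub (by omega : 1 ≤ k)]
        push_cast; ring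
    _ ≤ _ := Finset.sum_le_sum fun m hm' => key m (Finset.mem_range.1 hm')
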